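/- With the parameters of the previous construction ($\alpha\ge 2$ integer, $t=k/(100\alpha)$), any spanning tree of $T$ whose cost is at most $\alpha$ times the minimum spanning tree cost must contain at least $0.01 k$ weight-1 edges. -/

import Mathlib

noncomputable def edgeW {V : Type*} (w : V → V → ℝ) : Sym2 V → ℝ :=
  Sym2.lift ⟨fun a b => (w a b + w b a) / 2, fun a b => by ring⟩

noncomputable def treeCost {V : Type*} (w : V → V → ℝ) (E : Finset (Sym2 V)) : ℝ :=
  ∑ e ∈ E, edgeW w e

def Connects {V : Type*} (E : Finset (Sym2 V)) (T : Finset V) : Prop :=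
  ∀ u ∈ T, ∀ v ∈ T, (SimpleGraph.fromEdgeSet (E : Set (Sym2 V))).Reachable u v

def IsSteinerTree {V : Type*} (E : Finset (Sym2 V)) (T : Finset V) : Prop :=
  (∀ e ∈ E, ¬ e.IsDiag) ∧
  (SimpleGraph.fromEdgeSet (E : Set (Sym2 V))).IsAcyclic ∧ Connects E T

open Classical in
theorem stmt13 {V : Type*} [Fintype V] [DecidableEq V]
    (α t : ℕ) (hα : 2 ≤ α) (ht : 1 ≤ t)
    (hk : Fintype.card V = 100 * α * t)
    (part : V → Fin t)
    (hsize : ∀ i, (Finset.univ.filter (fun v => part v = i)).card = 100 * α)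
    (w : V → V → ℝ)
    (hw : ∀ u v, w u v = if u = v then 0 else if part u = part v then 1 else 2 * α) :
    ∀ E : Finset (Sym2 V), IsSteinerTree E Finset.univ →
      treeCost w E ≤ (α : ℝ) * ((100 * (α : ℝ) * t - t) + ((t : ℝ) - 1) * (2 * α)) →
      0.01 * (100 * (α : ℝ) * t) ≤ ((E.filter (fun e => edgeW w e = 1)).card : ℝ) := by
  rintro E ⟨hnd, hac, hconn⟩ hcost
  set G := SimpleGraph.fromEdgeSet (E : Set (Sym2 V)) with hG
  -- card positivity
  have hcardpos : 0 < Fintype.card V := by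
    rw [hk]; positivity
  have hNE : Nonempty V := Fintype.card_pos_iff.mp hcardpos
  have hconn' : G.Connected := by
    rw [SimpleGraph.connected_iff]
    exact ⟨fun u v => hconn u (Finset.mem_univ u) v (Finset.mem_univ v), hNE⟩
  have htree : G.IsTree := ⟨hconn', hac⟩
  have hES : G.edgeSet = ↑E := by
    rw [hG, SimpleGraph.edgeSet_fromEdgeSet]
    ext e
    simp only [Set.mem_diff, Finset.mem_coe, Set.mem_setOf_eq]
    exact ⟨fun h => h.1, fun h => ⟨h, hnd e h⟩⟩
  have hEF : G.edgeFinset = E := by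
    apply Finset.coe_injective
    rw [SimpleGraph.coe_edgeFinset, hES]
  have hcardE : E.card + 1 = 100 * α * t := by
    rw [← hEF, htree.card_edgeFinset, hk]
  -- weights
  have hwe : ∀ e ∈ E, edgeW w e = 1 ∨ edgeW w e = 2 * (α : ℝ) := by
    intro e he
    induction e using Sym2.ind with
    | _ u v =>
      have huv : u ≠ v := by
        have := hnd _ he
        simpa [Sym2.isDiag_iff_proj_eq] using this
      have h1 : edgeW w s(u, v) = w u v := by
        simp only [edgeW, Sym2.lift_mk]
        rw [hw u v, hw v u]
        simp [huv, huv.symm, eq_comm]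
      rw [h1, hw u v]
      by_cases h : part u = part v <;> simp [huv, h]
  -- split sum
  set A := E.filter (fun e => edgeW w e = 1) with hA
  set B := E.filter (fun e => ¬ edgeW w e = 1) with hB
  have hcards : A.card + B.card = E.card := Finset.card_filter_add_card_filter_not _
  have hcostA : ∑ e ∈ A, edgeW w e = A.card := by
    rw [Finset.sum_congr rfl (fun e he => (Finset.mem_filter.mp he).2)]
    simp [hA]
  have hBval : ∀ e ∈ B, edgeW w e = 2 * (α : ℝ) := by
    intro e he
    obtain ⟨heE, hne⟩ := Finset.mem_filter.mp he
    rcases hwe e heE with h | h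
    · exact absurd h hne
    · exact h
  have hcostB : ∑ e ∈ B, edgeW w e = B.card * (2 * (α : ℝ)) := by
    rw [Finset.sum_congr rfl hBval, Finset.sum_const, nsmul_eq_mul]
  have hsplit : treeCost w E = A.card + B.card * (2 * (α : ℝ)) := by
    rw [treeCost, ← Finset.sum_filter_add_sum_filter_not E (fun e => edgeW w e = 1),
      ← hA, ← hB, hcostA, hcostB]
  -- now real arithmetic
  have hαR : (2 : ℝ) ≤ α := by exact_mod_cast hα
  have htR : (1 : ℝ) ≤ t := by exact_mod_cast ht
  have hcards' : (A.card : ℝ) + B.card = 100 * α * t - 1 := by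
    have : (A.card + B.card + 1 : ℕ) = 100 * α * t := by rw [hcards, hcardE]
    have := congrArg (Nat.cast : ℕ → ℝ) this
    push_cast at this
    linarith
  rw [hsplit] at hcost
  have hBnn : (0 : ℝ) ≤ B.card := Nat.cast_nonneg _
  have : 0.01 * (100 * (α : ℝ) * t) = (α : ℝ) * t := by ring
  rw [this]
  nlinarith [sq_nonneg ((α:ℝ) - 2), sq_nonneg ((α:ℝ)*(t:ℝ)), mul_le_mul hαR htR (by norm_num) (by linarith), sq_nonneg ((α:ℝ))]
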